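/- Let n ≥ 2 be an integer and γ ∈ (0, 1/2]. With 𝔷_1, 𝔷_2, 𝔷_3, 𝔷_4 defined piecewise as: 𝔷_1 = 2+2γ+1/(2γ), 𝔷_2 = (1+γ)²/(2γ), 𝔷_3 = 1/(2γ), 𝔷_4 = 0 for 0 < γ ≤ 1/(n+1), and 𝔷_1 = (1−n)(1+2γ)²/(2(1−2nγ)), 𝔷_2 = (n−2γ)²/(2(1−n)(1−2nγ)), 𝔷_3 = (1−n)/(2(1−2nγ)), 𝔷_4 = 1 + (1−2γ)/(1−2nγ) for 1/(n+1) ≤ γ ≤ 1/2, the (n+2)×(n+2) dual matrix 𝒵 is positive semidefinite. -/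

import Mathlib

/-- The `(n+2) × (n+2)` dual matrix `𝒵` built from `𝔷_1, 𝔷_2, 𝔷_3, 𝔷_4`: its upper-left
`(n+1) × (n+1)` block is
`[[𝔷_1, √(𝔷_1𝔷_2) j_{n-1}ᵀ, -1-𝔷_3+𝔷_4/2],
  [√(𝔷_1𝔷_2) j_{n-1}, 𝔷_2 J_{n-1}, (-1/2-𝔷_3+𝔷_4/2) j_{n-1}],
  [-1-𝔷_3+𝔷_4/2, (-1/2-𝔷_3+𝔷_4/2) j_{n-1}ᵀ, 𝔷_3]]`,
its `(n+2, n+2)` entry is `𝔷_4`, and all remaining entries vanish. -/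
noncomputable def Zmat (n : ℕ) (z1 z2 z3 z4 : ℝ) :
    Matrix (Fin (n + 2)) (Fin (n + 2)) ℝ :=
  Matrix.of fun p q =>
    if p.val = 0 ∧ q.val = 0 then z1
    else if (p.val = 0 ∧ 1 ≤ q.val ∧ q.val ≤ n - 1) ∨
        (1 ≤ p.val ∧ p.val ≤ n - 1 ∧ q.val = 0) then Real.sqrt (z1 * z2)
    else if (p.val = 0 ∧ q.val = n) ∨ (p.val = n ∧ q.val = 0) then -1 - z3 + z4 / 2
    else if 1 ≤ p.val ∧ p.val ≤ n - 1 ∧ 1 ≤ q.val ∧ q.val ≤ n - 1 then z2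
    else if (1 ≤ p.val ∧ p.val ≤ n - 1 ∧ q.val = n) ∨
        (p.val = n ∧ 1 ≤ q.val ∧ q.val ≤ n - 1) then -1 / 2 - z3 + z4 / 2
    else if p.val = n ∧ q.val = n then z3
    else if p.val = n + 1 ∧ q.val = n + 1 then z4
    else 0

lemma psd_outer {m : Type*} [Fintype m] (v : m → ℝ) :
    (Matrix.vecMulVec v v).PosSemidef := by
  rw [Matrix.posSemidef_iff_dotProduct_mulVec]
  constructor
  · ext i j
    simp [Matrix.vecMulVec_apply, Matrix.conjTranspose_apply, mul_comm]
  · intro x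
    have h : dotProduct (star x) ((Matrix.vecMulVec v v).mulVec x)
        = (∑ i, v i * x i) ^ 2 := by
      simp only [Matrix.mulVec, Matrix.vecMulVec_apply, dotProduct, star_trivial, sq,
        Finset.sum_mul, Finset.mul_sum]
      rw [Finset.sum_comm]
      refine Finset.sum_congr rfl fun i _ => Finset.sum_congr rfl fun j _ => ?_; ring
    rw [h]; positivity

set_option maxHeartbeats 4000000 in
lemma master (n : ℕ) (hn : 2 ≤ n) (z1 z2 z3 z4 : ℝ)
    (h1 : 0 ≤ z1) (h2 : 0 ≤ z2) (h3 : 0 ≤ z3) (h4 : 0 ≤ z4)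
    (ha : (1 + z3 - z4 / 2) ^ 2 = z1 * z3) (ha' : 0 ≤ 1 + z3 - z4 / 2)
    (hb : (1 / 2 + z3 - z4 / 2) ^ 2 = z2 * z3) (hb' : 0 ≤ 1 / 2 + z3 - z4 / 2) :
    (Zmat n z1 z2 z3 z4).PosSemidef := by
  set v : Fin (n + 2) → ℝ := fun p =>
    if p.val = 0 then Real.sqrt z1
    else if p.val ≤ n - 1 then Real.sqrt z2
    else if p.val = n then -Real.sqrt z3 else 0 with hv
  set u : Fin (n + 2) → ℝ := fun p =>
    if p.val = n + 1 then Real.sqrt z4 else 0 with hu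
  have hs1 : Real.sqrt z1 * Real.sqrt z1 = z1 := Real.mul_self_sqrt h1
  have hs2 : Real.sqrt z2 * Real.sqrt z2 = z2 := Real.mul_self_sqrt h2
  have hs3 : Real.sqrt z3 * Real.sqrt z3 = z3 := Real.mul_self_sqrt h3
  have hs4 : Real.sqrt z4 * Real.sqrt z4 = z4 := Real.mul_self_sqrt h4
  have h12 : Real.sqrt (z1 * z2) = Real.sqrt z1 * Real.sqrt z2 := Real.sqrt_mul h1 z2
  have h13 : Real.sqrt z1 * Real.sqrt z3 = 1 + z3 - z4 / 2 := by
    rw [← Real.sqrt_mul h1 z3, ← ha, Real.sqrt_sq ha']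
  have h23 : Real.sqrt z2 * Real.sqrt z3 = 1 / 2 + z3 - z4 / 2 := by
    rw [← Real.sqrt_mul h2 z3, ← hb, Real.sqrt_sq hb']
  have key : Zmat n z1 z2 z3 z4 = Matrix.vecMulVec v v + Matrix.vecMulVec u u := by
    ext p q
    have hp := p.isLt
    have hq := q.isLt
    simp only [Zmat, Matrix.of_apply, Matrix.add_apply, Matrix.vecMulVec_apply, hv, hu]
    split_ifs <;>
      first
        | omega
        | ring1
        | linear_combination hs1
        | linear_combination -hs1
        | linear_combination hs2
        | linear_combination -hs2
        | linear_combination hs3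
        | linear_combination -hs3
        | linear_combination hs4
        | linear_combination -hs4
        | linear_combination h12
        | linear_combination -h12
        | linear_combination h13
        | linear_combination -h13
        | linear_combination h23
        | linear_combination -h23
  rw [key]
  exact (psd_outer v).add (psd_outer u)

lemma div_nn {a b : ℝ} (ha : a ≤ 0) (hb : b ≤ 0) : 0 ≤ a / b :=
  div_nonneg_iff.mpr (Or.inr ⟨ha, hb⟩)

/-- With the dual variables `𝔷_1, 𝔷_2, 𝔷_3, 𝔷_4` defined piecewise in `γ ∈ (0, 1/2]` as
stated, the `(n+2) × (n+2)` dual matrix `𝒵` is positive semidefinite. -/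
theorem Zmat_posSemidef (n : ℕ) (hn : 2 ≤ n) (γ : ℝ)
    (hγ1 : 0 < γ) (hγ2 : γ ≤ 1 / 2) :
    (∀ z1 z2 z3 z4 : ℝ, γ ≤ 1 / ((n : ℝ) + 1) →
      z1 = 2 + 2 * γ + 1 / (2 * γ) →
      z2 = (1 + γ) ^ 2 / (2 * γ) →
      z3 = 1 / (2 * γ) →
      z4 = 0 →
      (Zmat n z1 z2 z3 z4).PosSemidef) ∧
    (∀ z1 z2 z3 z4 : ℝ, 1 / ((n : ℝ) + 1) ≤ γ →
      z1 = (1 - (n : ℝ)) * (1 + 2 * γ) ^ 2 / (2 * (1 - 2 * (n : ℝ) * γ)) →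
      z2 = ((n : ℝ) - 2 * γ) ^ 2 / (2 * (1 - (n : ℝ)) * (1 - 2 * (n : ℝ) * γ)) →
      z3 = (1 - (n : ℝ)) / (2 * (1 - 2 * (n : ℝ) * γ)) →
      z4 = 1 + (1 - 2 * γ) / (1 - 2 * (n : ℝ) * γ) →
      (Zmat n z1 z2 z3 z4).PosSemidef) := by
  have hγ0 : (2 : ℝ) * γ ≠ 0 := by positivity
  constructor
  · rintro z1 z2 z3 z4 _ rfl rfl rfl rfl
    apply master n hn
    · positivity
    · positivity
    · positivity
    · exact le_refl (0 : ℝ)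
    · field_simp
      ring
    · have h : 0 < 1 / (2 * γ) := by positivity
      linarith
    · field_simp
      ring
    · have h : 0 < 1 / (2 * γ) := by positivity
      linarith
  · rintro z1 z2 z3 z4 hγ3 rfl rfl rfl rfl
    set N : ℝ := (n : ℝ) with hN
    have hN2 : (2 : ℝ) ≤ N := by rw [hN]; exact_mod_cast hn
    have hg : 1 ≤ (N + 1) * γ := by
      rw [div_le_iff₀ (by linarith : (0:ℝ) < N + 1)] at hγ3
      linarith
    have hNg : 2 * γ ≤ N * γ := by nlinarith
    have hD : 1 - 2 * N * γ < 0 := by nlinarith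
    have hDne : 1 - 2 * N * γ ≠ 0 := ne_of_lt hD
    have hn1 : 1 - N < 0 := by linarith
    have hn1ne : 1 - N ≠ 0 := ne_of_lt hn1
    have hD1 : 1 - 2 * γ * N ≠ 0 := by contrapose! hDne; linarith
    have hD2 : 1 - N * 2 * γ ≠ 0 := by contrapose! hDne; linarith
    apply master n hn
    · apply div_nn
      · apply mul_nonpos_of_nonpos_of_nonneg (by linarith) (by positivity)
      · linarith
    · apply div_nonneg (sq_nonneg _) (le_of_lt ?_)
      have : (0:ℝ) < 2 * (1 - N) * (1 - 2 * N * γ) := by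
        have := mul_pos_of_neg_of_neg (by linarith : 2 * (1 - N) < 0) hD
        linarith [this]
      exact this
    · exact div_nn (by linarith) (by linarith)
    · have e : 1 + (1 - 2 * γ) / (1 - 2 * N * γ)
          = (2 - 2 * (N + 1) * γ) / (1 - 2 * N * γ) := by
        field_simp
        ring
      rw [e]
      exact div_nn (by nlinarith) (by linarith)
    · field_simp
      ring
    · have e : 1 + (1 - N) / (2 * (1 - 2 * N * γ))
          - (1 + (1 - 2 * γ) / (1 - 2 * N * γ)) / 2
          = (1 - N) * (1 + 2 * γ) / (2 * (1 - 2 * N * γ)) := by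
        field_simp
        ring
      rw [e]
      exact div_nn (by nlinarith) (by linarith)
    · field_simp
      ring
    · have e : 1 / 2 + (1 - N) / (2 * (1 - 2 * N * γ))
          - (1 + (1 - 2 * γ) / (1 - 2 * N * γ)) / 2
          = (2 * γ - N) / (2 * (1 - 2 * N * γ)) := by
        field_simp
        ring
      rw [e]
      exact div_nn (by linarith) (by linarith)
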